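/- Define the Q-function Q(x) = (1/√(2π)) ∫_x^∞ exp(−t²/2) dt. For fixed P > 0, P_ASE > 0, η > 0, define for l ∈ {0, …, 4N}, t ∈ {1, 5, 9}: γ_{l,t,N} = P_ASE + (η/(2N+1)³)·(P(2N + 4l + t)/5)³. Then for each fixed t, lim_{N→∞} Σ_{l=0}^{4N} 4^{−2N} C(4N, l) Q(√(P/(5γ_{l,t,N}))) = Q(√((P/5)/(P_ASE + ηP³))). -/

import Mathlib

open Finset Filter Real

/-- The Gaussian Q-function Q(x) = (1/√(2π)) ∫_x^∞ e^{−t²/2} dt. -/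
noncomputable def gaussQ (x : ℝ) : ℝ :=
  (Real.sqrt (2 * Real.pi))⁻¹ * ∫ u in Set.Ioi x, Real.exp (-u ^ 2 / 2)

open MeasureTheory

lemma gauss_fun_eq : (fun u : ℝ => Real.exp (-u ^ 2 / 2)) =
    fun u : ℝ => Real.exp (-(1/2) * u ^ 2) := by
  funext u; congr 1; ring

lemma integrable_gauss : Integrable (fun u : ℝ => Real.exp (-u ^ 2 / 2)) := by
  rw [gauss_fun_eq]; exact integrable_exp_neg_mul_sq (by norm_num)

lemma integral_gauss_total : (∫ u : ℝ, Real.exp (-u ^ 2 / 2)) = Real.sqrt (2 * Real.pi) := by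
  rw [gauss_fun_eq, integral_gaussian]
  rw [show Real.pi / (1/2) = 2 * Real.pi by ring]

lemma sqrt_two_pi_pos : 0 < Real.sqrt (2 * Real.pi) :=
  Real.sqrt_pos.2 (by positivity)

lemma gaussQ_nonneg (x : ℝ) : 0 ≤ gaussQ x := by
  apply mul_nonneg (inv_nonneg.2 sqrt_two_pi_pos.le)
  apply integral_nonneg
  intro u; positivity

lemma gaussQ_le_one (x : ℝ) : gaussQ x ≤ 1 := by
  have h1 : (∫ u in Set.Ioi x, Real.exp (-u ^ 2 / 2)) ≤ ∫ u : ℝ, Real.exp (-u ^ 2 / 2) :=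
    setIntegral_le_integral integrable_gauss (Filter.Eventually.of_forall fun u => by positivity)
  rw [integral_gauss_total] at h1
  calc gaussQ x ≤ (Real.sqrt (2 * Real.pi))⁻¹ * Real.sqrt (2 * Real.pi) := by
        exact mul_le_mul_of_nonneg_left h1 (inv_nonneg.2 sqrt_two_pi_pos.le)
    _ = 1 := inv_mul_cancel₀ sqrt_two_pi_pos.ne'

lemma gaussQ_sub_eq {x y : ℝ} (h : x ≤ y) :
    gaussQ x - gaussQ y =
      (Real.sqrt (2 * Real.pi))⁻¹ * ∫ u in Set.Ioc x y, Real.exp (-u ^ 2 / 2) := by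
  have hsplit : (∫ u in Set.Ioi x, Real.exp (-u ^ 2 / 2)) =
      (∫ u in Set.Ioc x y, Real.exp (-u ^ 2 / 2)) + ∫ u in Set.Ioi y, Real.exp (-u ^ 2 / 2) := by
    rw [← setIntegral_union (Set.Ioc_disjoint_Ioi le_rfl) measurableSet_Ioi
      integrable_gauss.integrableOn integrable_gauss.integrableOn, Set.Ioc_union_Ioi_eq_Ioi h]
  unfold gaussQ
  rw [← mul_sub, hsplit]
  ring

lemma gaussQ_Ioc_nonneg (x y : ℝ) : 0 ≤ ∫ u in Set.Ioc x y, Real.exp (-u ^ 2 / 2) :=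
  setIntegral_nonneg measurableSet_Ioc fun u _ => (Real.exp_pos _).le

lemma gaussQ_Ioc_le {x y : ℝ} (h : x ≤ y) :
    (∫ u in Set.Ioc x y, Real.exp (-u ^ 2 / 2)) ≤ y - x := by
  calc (∫ u in Set.Ioc x y, Real.exp (-u ^ 2 / 2)) ≤ ∫ _ in Set.Ioc x y, (1:ℝ) := by
        apply setIntegral_mono_on integrable_gauss.integrableOn (integrableOn_const (by simp))
          measurableSet_Ioc
        intro u _
        rw [Real.exp_le_one_iff]
        nlinarith [sq_nonneg u]
    _ = y - x := by
        rw [setIntegral_const, measureReal_def, Real.volume_Ioc, smul_eq_mul, mul_one,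
          ENNReal.toReal_ofReal (by linarith)]

lemma continuous_gaussQ : Continuous gaussQ := by
  have key : ∀ x y : ℝ, x ≤ y → |gaussQ x - gaussQ y| ≤ (Real.sqrt (2 * Real.pi))⁻¹ * |y - x| := by
    intro x y h
    rw [gaussQ_sub_eq h, abs_of_nonneg (by linarith : (0:ℝ) ≤ y - x)]
    rw [abs_of_nonneg (mul_nonneg (inv_nonneg.2 sqrt_two_pi_pos.le) (gaussQ_Ioc_nonneg x y))]
    exact mul_le_mul_of_nonneg_left (gaussQ_Ioc_le h) (inv_nonneg.2 sqrt_two_pi_pos.le)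
  have lip : LipschitzWith ⟨(Real.sqrt (2 * Real.pi))⁻¹, inv_nonneg.2 sqrt_two_pi_pos.le⟩ gaussQ := by
    apply LipschitzWith.of_dist_le_mul
    intro x y
    simp only [NNReal.coe_mk, Real.dist_eq]
    rcases le_total x y with h | h
    · have := key x y h
      rwa [abs_sub_comm y x] at this
    · have := key y x h
      rwa [abs_sub_comm (gaussQ y)] at this
  exact lip.continuous

lemma sum_choose_real (n : ℕ) :
    ∑ l ∈ Finset.range (n + 1), ((n.choose l : ℝ)) = 2 ^ n := by
  rw [← Nat.cast_sum, Nat.sum_range_choose]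
  norm_num

lemma sum_mul_choose_real (n : ℕ) :
    ∑ l ∈ Finset.range (n + 2), (l : ℝ) * ((n+1).choose l : ℝ) = (n + 1) * 2 ^ n := by
  rw [Finset.sum_range_succ']
  simp only [Nat.cast_zero, zero_mul, add_zero]
  have : ∀ k, ((k + 1 : ℕ) : ℝ) * (((n+1).choose (k+1) : ℕ) : ℝ) = (n+1 : ℝ) * (n.choose k : ℝ) := by
    intro k
    have h := Nat.add_one_mul_choose_eq n k
    have : ((n+1) * n.choose k : ℕ) = ((n+1).choose (k+1) * (k+1) : ℕ) := h
    calc ((k + 1 : ℕ) : ℝ) * (((n+1).choose (k+1) : ℕ) : ℝ)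
        = (((n+1).choose (k+1) * (k+1) : ℕ) : ℝ) := by push_cast; ring
      _ = (((n+1) * n.choose k : ℕ) : ℝ) := by rw [← this]
      _ = (n+1 : ℝ) * (n.choose k : ℝ) := by push_cast; ring
  calc ∑ k ∈ Finset.range (n + 1), ((k + 1 : ℕ) : ℝ) * ((n+1).choose (k+1) : ℝ)
      = ∑ k ∈ Finset.range (n + 1), (n+1 : ℝ) * (n.choose k : ℝ) :=
        Finset.sum_congr rfl fun k _ => this k
    _ = (n+1 : ℝ) * ∑ k ∈ Finset.range (n + 1), (n.choose k : ℝ) := by rw [Finset.mul_sum]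
    _ = (n + 1) * 2 ^ n := by rw [sum_choose_real]

lemma sum_sq_mul_choose_real (n : ℕ) :
    ∑ l ∈ Finset.range (n + 3), (l : ℝ)^2 * ((n+2).choose l : ℝ) = (n + 2) * (n + 3) * 2 ^ n := by
  rw [Finset.sum_range_succ']
  simp only [Nat.cast_zero, ne_eq, OfNat.ofNat_ne_zero, not_false_eq_true, zero_pow, zero_mul,
    add_zero]
  have key : ∀ k, ((k + 1 : ℕ) : ℝ)^2 * (((n+2).choose (k+1) : ℕ) : ℝ)
      = (n+2 : ℝ) * ((k:ℝ) * ((n+1).choose k : ℝ) + ((n+1).choose k : ℝ)) := by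
    intro k
    have h : ((n+2) * (n+1).choose k : ℕ) = ((n+2).choose (k+1) * (k+1) : ℕ) :=
      Nat.add_one_mul_choose_eq (n+1) k
    have h' : (((n+2).choose (k+1) : ℕ) : ℝ) * ((k:ℝ)+1) = ((n+2):ℝ) * ((n+1).choose k : ℝ) := by
      have := congrArg (fun m : ℕ => (m : ℝ)) h
      push_cast at this
      linarith
    calc ((k + 1 : ℕ) : ℝ)^2 * (((n+2).choose (k+1) : ℕ) : ℝ)
        = ((k:ℝ)+1) * ((((n+2).choose (k+1) : ℕ) : ℝ) * ((k:ℝ)+1)) := by push_cast; ring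
      _ = ((k:ℝ)+1) * (((n+2):ℝ) * ((n+1).choose k : ℝ)) := by rw [h']
      _ = (n+2 : ℝ) * ((k:ℝ) * ((n+1).choose k : ℝ) + ((n+1).choose k : ℝ)) := by ring
  calc ∑ k ∈ Finset.range (n + 2), ((k + 1 : ℕ) : ℝ)^2 * ((n+2).choose (k+1) : ℝ)
      = ∑ k ∈ Finset.range (n + 2),
          (n+2 : ℝ) * ((k:ℝ) * ((n+1).choose k : ℝ) + ((n+1).choose k : ℝ)) :=
        Finset.sum_congr rfl fun k _ => key k
    _ = (n+2 : ℝ) * ((∑ k ∈ Finset.range (n + 2), (k:ℝ) * ((n+1).choose k : ℝ))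
          + ∑ k ∈ Finset.range (n + 2), ((n+1).choose k : ℝ)) := by
        rw [← Finset.sum_add_distrib, ← Finset.mul_sum]
    _ = (n+2 : ℝ) * ((n + 1) * 2 ^ n + 2 ^ (n+1)) := by
        rw [sum_mul_choose_real, sum_choose_real]
    _ = (n + 2) * (n + 3) * 2 ^ n := by ring

/-- Second central moment (scaled): `∑ (2l - n)^2 C(n,l) = n * 2^n`. -/
lemma sum_centered_sq_choose (n : ℕ) :
    ∑ l ∈ Finset.range (n + 1), (2 * (l:ℝ) - n)^2 * (n.choose l : ℝ) = (n : ℝ) * 2 ^ n := by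
  match n with
  | 0 => simp
  | 1 => simp [Finset.sum_range_succ]; norm_num
  | (m + 2) =>
    have e : ∀ l : ℕ, (2 * (l:ℝ) - (m+2:ℕ))^2 * ((m+2).choose l : ℝ)
        = 4 * ((l:ℝ)^2 * ((m+2).choose l : ℝ)) - (4 * ((m:ℝ)+2)) * ((l:ℝ) * ((m+2).choose l : ℝ))
          + ((m:ℝ)+2)^2 * ((m+2).choose l : ℝ) := by
      intro l; push_cast; ring
    rw [Finset.sum_congr rfl fun l _ => e l]
    rw [Finset.sum_add_distrib, Finset.sum_sub_distrib, ← Finset.mul_sum, ← Finset.mul_sum,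
      ← Finset.mul_sum]
    have h2 : ∑ l ∈ Finset.range (m + 3), (l : ℝ) * ((m+2).choose l : ℝ) = (m + 2) * 2 ^ (m+1) := by
      have := sum_mul_choose_real (m+1)
      push_cast at this ⊢
      convert this using 2 <;> push_cast <;> ring
    rw [show m + 2 + 1 = m + 3 from rfl, sum_sq_mul_choose_real m, h2, sum_choose_real (m+2)]
    push_cast
    ring

/-- Binomial weight `2^{-4N} C(4N, l)`. -/
noncomputable def wBin (N l : ℕ) : ℝ := ((2:ℝ) ^ (4 * N))⁻¹ * ((4 * N).choose l : ℝ)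

/-- `g(u) = Q(√(P / (5 (Pase + η (P u / 5)^3))))`. -/
noncomputable def gFun (P Pase η u : ℝ) : ℝ :=
  gaussQ (Real.sqrt (P / (5 * (Pase + η * (P * u / 5) ^ 3))))

/-- `u_{N,l} = (2N + 4l + t) / (2N + 1)`. -/
noncomputable def uVal (N t l : ℕ) : ℝ := (2 * N + 4 * l + t) / (2 * N + 1)

lemma wBin_nonneg (N l : ℕ) : 0 ≤ wBin N l := by
  unfold wBin; positivity

lemma sum_wBin (N : ℕ) : ∑ l ∈ Finset.range (4 * N + 1), wBin N l = 1 := by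
  unfold wBin
  rw [← Finset.mul_sum, sum_choose_real]
  exact inv_mul_cancel₀ (by positivity)

lemma sum_wBin_sq (N : ℕ) :
    ∑ l ∈ Finset.range (4 * N + 1), (2 * (l:ℝ) - 4 * N) ^ 2 * wBin N l = 4 * (N:ℝ) := by
  unfold wBin
  have e : ∀ l : ℕ, (2 * (l:ℝ) - 4 * N) ^ 2 * (((2:ℝ) ^ (4 * N))⁻¹ * ((4 * N).choose l : ℝ))
      = ((2:ℝ) ^ (4 * N))⁻¹ * ((2 * (l:ℝ) - ((4 * N : ℕ) : ℝ)) ^ 2 * ((4 * N).choose l : ℝ)) := by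
    intro l; push_cast; ring
  rw [Finset.sum_congr rfl fun l _ => e l, ← Finset.mul_sum, sum_centered_sq_choose (4 * N)]
  rw [show (((4 * N : ℕ) : ℝ)) = 4 * (N:ℝ) by push_cast; ring]
  field_simp

lemma gFun_nonneg (P Pase η u : ℝ) : 0 ≤ gFun P Pase η u := gaussQ_nonneg _
lemma gFun_le_one (P Pase η u : ℝ) : gFun P Pase η u ≤ 1 := gaussQ_le_one _

/-- Per-term bound: `|g(u) - g(5)| ≤ ε/2 + ((u-5)/δ)²`. -/
lemma per_term_bound {P Pase η δ ε : ℝ} (hδ : 0 < δ)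
    (hδ' : ∀ u : ℝ, |u - 5| < δ → |gFun P Pase η u - gFun P Pase η 5| < ε / 2)
    (hε : 0 < ε) (u : ℝ) :
    |gFun P Pase η u - gFun P Pase η 5| ≤ ε / 2 + ((u - 5) / δ) ^ 2 := by
  by_cases h : |u - 5| < δ
  · have := hδ' u h
    nlinarith [sq_nonneg ((u - 5) / δ)]
  · push_neg at h
    have h1 : |gFun P Pase η u - gFun P Pase η 5| ≤ 1 := by
      rw [abs_sub_le_iff]
      constructor <;>
        nlinarith [gFun_nonneg P Pase η u, gFun_le_one P Pase η u,
          gFun_nonneg P Pase η 5, gFun_le_one P Pase η 5]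
    have h2 : (1:ℝ) ≤ ((u - 5) / δ) ^ 2 := by
      rw [div_pow, le_div_iff₀ (by positivity)]
      nlinarith [sq_abs (u - 5), abs_nonneg (u - 5)]
    nlinarith

lemma four_zpow (N : ℕ) : (4:ℝ) ^ (-(2 * N : ℤ)) = ((2:ℝ) ^ (4 * N))⁻¹ := by
  rw [zpow_neg]
  congr 1
  rw [show (2 * (N:ℤ)) = ((2 * N : ℕ) : ℤ) by push_cast; ring, zpow_natCast,
    show (4:ℝ) = 2 ^ 2 by norm_num, ← pow_mul, show 2 * (2 * N) = 4 * N by ring]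

lemma uVal_sub_five (N t l : ℕ) :
    uVal N t l - 5 = (2 * (2 * (l:ℝ) - 4 * N) + ((t:ℝ) - 5)) / (2 * (N:ℝ) + 1) := by
  unfold uVal
  have hc : (2 * (N:ℝ) + 1) ≠ 0 := by positivity
  field_simp
  ring

lemma main_est (P Pase η δ ε : ℝ) (t N : ℕ) (hδ : 0 < δ) (hε : 0 < ε)
    (hδ' : ∀ u : ℝ, |u - 5| < δ → |gFun P Pase η u - gFun P Pase η 5| < ε / 2)
    (ht16 : ((t:ℝ) - 5) ^ 2 ≤ 16) :
    |(∑ l ∈ Finset.range (4 * N + 1), wBin N l * gFun P Pase η (uVal N t l))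
        - gFun P Pase η 5|
      ≤ ε / 2 + (32 * (N:ℝ) + 32) / ((2 * (N:ℝ) + 1) ^ 2 * δ ^ 2) := by
  have hc : (2 * (N:ℝ) + 1) ≠ 0 := by positivity
  set G5 := gFun P Pase η 5 with hG5
  have h1 : ∑ l ∈ Finset.range (4 * N + 1), wBin N l * (gFun P Pase η (uVal N t l) - G5)
      = (∑ l ∈ Finset.range (4 * N + 1), wBin N l * gFun P Pase η (uVal N t l)) - G5 := by
    simp only [mul_sub]
    rw [Finset.sum_sub_distrib, ← Finset.sum_mul, sum_wBin, one_mul]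
  rw [← h1]
  -- per-term bound
  have hptb : ∀ l ∈ Finset.range (4 * N + 1),
      |wBin N l * (gFun P Pase η (uVal N t l) - G5)|
        ≤ wBin N l * (ε / 2 + (8 * (2 * (l:ℝ) - 4 * N) ^ 2 + 32)
            / ((2 * (N:ℝ) + 1) ^ 2 * δ ^ 2)) := by
    intro l _
    rw [abs_mul, abs_of_nonneg (wBin_nonneg N l)]
    apply mul_le_mul_of_nonneg_left _ (wBin_nonneg N l)
    have hb1 := per_term_bound hδ hδ' hε (uVal N t l)
    have hb2 : ((uVal N t l - 5) / δ) ^ 2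
        ≤ (8 * (2 * (l:ℝ) - 4 * N) ^ 2 + 32) / ((2 * (N:ℝ) + 1) ^ 2 * δ ^ 2) := by
      rw [uVal_sub_five, div_pow, div_pow, div_div]
      rw [div_le_div_iff₀ (by positivity) (by positivity)]
      set a := 2 * (l:ℝ) - 4 * N
      set b := (t:ℝ) - 5
      have key : (2 * a + b) ^ 2 ≤ 8 * a ^ 2 + 32 := by
        nlinarith [sq_nonneg (2 * a - b)]
      exact mul_le_mul_of_nonneg_right key (by positivity)
    linarith
  calc |∑ l ∈ Finset.range (4 * N + 1), wBin N l * (gFun P Pase η (uVal N t l) - G5)|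
      ≤ ∑ l ∈ Finset.range (4 * N + 1), |wBin N l * (gFun P Pase η (uVal N t l) - G5)| :=
        Finset.abs_sum_le_sum_abs _ _
    _ ≤ ∑ l ∈ Finset.range (4 * N + 1), wBin N l * (ε / 2 + (8 * (2 * (l:ℝ) - 4 * N) ^ 2 + 32)
          / ((2 * (N:ℝ) + 1) ^ 2 * δ ^ 2)) := Finset.sum_le_sum hptb
    _ = ε / 2 + (32 * (N:ℝ) + 32) / ((2 * (N:ℝ) + 1) ^ 2 * δ ^ 2) := by
        have expand : ∀ l : ℕ, wBin N l * (ε / 2 + (8 * (2 * (l:ℝ) - 4 * N) ^ 2 + 32)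
              / ((2 * (N:ℝ) + 1) ^ 2 * δ ^ 2))
            = (ε / 2 + 32 / ((2 * (N:ℝ) + 1) ^ 2 * δ ^ 2)) * wBin N l
              + (8 / ((2 * (N:ℝ) + 1) ^ 2 * δ ^ 2)) * ((2 * (l:ℝ) - 4 * N) ^ 2 * wBin N l) := by
          intro l; field_simp; ring
        rw [Finset.sum_congr rfl fun l _ => expand l, Finset.sum_add_distrib, ← Finset.mul_sum,
          ← Finset.mul_sum, sum_wBin, sum_wBin_sq]
        field_simp
        ring

/-- Limit as N → ∞ of the binomially averaged BER terms of the finite-memory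
GN model equals the regular GN model value. -/
theorem ber_terms_tendsto (P Pase η : ℝ) (hP : 0 < P) (hA : 0 < Pase) (hη : 0 < η)
    (t : ℕ) (ht : t ∈ ({1, 5, 9} : Set ℕ)) :
    Tendsto (fun N : ℕ =>
      ∑ l ∈ Finset.range (4 * N + 1),
        (4 : ℝ) ^ (-(2 * N : ℤ)) * (Nat.choose (4 * N) l : ℝ) *
          gaussQ (Real.sqrt (P / (5 *
            (Pase + η / (2 * N + 1) ^ 3 * (P * (2 * N + 4 * l + t) / 5) ^ 3)))))
      atTop (nhds (gaussQ (Real.sqrt ((P / 5) / (Pase + η * P ^ 3))))) := by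
  have ht16 : ((t:ℝ) - 5) ^ 2 ≤ 16 := by
    rcases ht with h | h | h <;> subst h <;> norm_num
  -- the limit value is g(5)
  have hg5 : gaussQ (Real.sqrt ((P / 5) / (Pase + η * P ^ 3))) = gFun P Pase η 5 := by
    unfold gFun
    congr 2
    rw [div_div]
    norm_num
  -- rewrite summands
  have hterm : ∀ N l : ℕ,
      (4 : ℝ) ^ (-(2 * N : ℤ)) * (Nat.choose (4 * N) l : ℝ) *
          gaussQ (Real.sqrt (P / (5 *
            (Pase + η / (2 * (N:ℝ) + 1) ^ 3 * (P * (2 * (N:ℝ) + 4 * (l:ℝ) + (t:ℝ)) / 5) ^ 3))))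
        = wBin N l * gFun P Pase η (uVal N t l) := by
    intro N l
    unfold wBin gFun uVal
    have hc : (2 * (N:ℝ) + 1) ≠ 0 := by positivity
    have hX : P / (5 * (Pase + η / (2 * (N:ℝ) + 1) ^ 3
          * (P * (2 * (N:ℝ) + 4 * (l:ℝ) + (t:ℝ)) / 5) ^ 3))
        = P / (5 * (Pase + η
          * (P * ((2 * (N:ℝ) + 4 * (l:ℝ) + (t:ℝ)) / (2 * (N:ℝ) + 1)) / 5) ^ 3)) := by
      have h5 : Pase + η / (2 * (N:ℝ) + 1) ^ 3
            * (P * (2 * (N:ℝ) + 4 * (l:ℝ) + (t:ℝ)) / 5) ^ 3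
          = Pase + η
            * (P * ((2 * (N:ℝ) + 4 * (l:ℝ) + (t:ℝ)) / (2 * (N:ℝ) + 1)) / 5) ^ 3 := by
        field_simp
      rw [h5]
    rw [four_zpow, hX]
  -- continuity at 5
  have hcont : ContinuousAt (gFun P Pase η) 5 := by
    have hne : (5:ℝ) * (Pase + η * (P * 5 / 5) ^ 3) ≠ 0 := by
      rw [show P * 5 / 5 = P by ring]
      positivity
    have h1 : ContinuousAt (fun u : ℝ => P / (5 * (Pase + η * (P * u / 5) ^ 3))) 5 :=
      ContinuousAt.div continuousAt_const (by fun_prop) hne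
    exact (continuous_gaussQ.continuousAt).comp ((Real.continuous_sqrt.continuousAt).comp h1)
  rw [hg5, Metric.tendsto_atTop]
  intro ε hε
  obtain ⟨δ, hδ, hδ'⟩ := Metric.continuousAt_iff.1 hcont (ε / 2) (by linarith)
  have hδ'' : ∀ u : ℝ, |u - 5| < δ → |gFun P Pase η u - gFun P Pase η 5| < ε / 2 := by
    intro u hu
    have := hδ' (show dist u 5 < δ by rwa [Real.dist_eq])
    rwa [Real.dist_eq] at this
  obtain ⟨M, hM⟩ := exists_nat_gt (32 / (δ ^ 2 * ε))
  refine ⟨M + 1, fun N hN => ?_⟩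
  have hN1 : (1:ℝ) ≤ (N:ℝ) := by exact_mod_cast Nat.one_le_iff_ne_zero.2 (by omega)
  have hNR : 32 / (δ ^ 2 * ε) < (N:ℝ) := by
    have : (M:ℝ) + 1 ≤ (N:ℝ) := by exact_mod_cast hN
    linarith
  rw [Real.dist_eq]
  have hrw : (∑ l ∈ Finset.range (4 * N + 1),
        (4 : ℝ) ^ (-(2 * N : ℤ)) * (Nat.choose (4 * N) l : ℝ) *
          gaussQ (Real.sqrt (P / (5 *
            (Pase + η / (2 * (N:ℝ) + 1) ^ 3 * (P * (2 * (N:ℝ) + 4 * (l:ℝ) + (t:ℝ)) / 5) ^ 3)))))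
      = ∑ l ∈ Finset.range (4 * N + 1), wBin N l * gFun P Pase η (uVal N t l) :=
    Finset.sum_congr rfl fun l _ => hterm N l
  rw [hrw]
  have hmain := main_est P Pase η δ ε t N hδ hε hδ'' ht16
  have hX : (32 * (N:ℝ) + 32) / ((2 * (N:ℝ) + 1) ^ 2 * δ ^ 2) < ε / 2 := by
    rw [div_lt_iff₀ (by positivity)]
    have h32 : 32 < (N:ℝ) * (δ ^ 2 * ε) := by
      rw [div_lt_iff₀ (by positivity)] at hNR
      linarith
    nlinarith [sq_nonneg δ, sq_nonneg ((N:ℝ) - 1), mul_pos (mul_pos hδ hδ) hε]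
  calc |(∑ l ∈ Finset.range (4 * N + 1), wBin N l * gFun P Pase η (uVal N t l))
        - gFun P Pase η 5| ≤ _ := hmain
    _ < ε / 2 + ε / 2 := by linarith
    _ = ε := by ring
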